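/- Let a, b ∈ ℝⁿ with ⟨a, b⟩ > 0. Then every real symmetric positive semidefinite n×n matrix X with X a = b satisfies tr X ≥ ‖b‖²/⟨a, b⟩, and the matrix X* := b bᵀ/⟨a, b⟩ is symmetric positive semidefinite, satisfies X* a = b, and attains tr X* = ‖b‖²/⟨a, b⟩. Hence the optimal value of the problem min{ tr X : X symmetric positive semidefinite, X a = b } equals ‖b‖²/⟨a, b⟩. -/

import Mathlib

open Matrix


lemma lb_aux {n : ℕ} (a b : Fin n → ℝ) (hab : 0 < a ⬝ᵥ b)
    (X : Matrix (Fin n) (Fin n) ℝ) (hX : X.PosSemidef) (hXa : X.mulVec a = b) :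
    (b ⬝ᵥ b) / (a ⬝ᵥ b) ≤ X.trace := by
  obtain ⟨B, rfl⟩ : ∃ B : Matrix (Fin n) (Fin n) ℝ, X = Bᴴ * B := by
    open scoped MatrixOrder in
    obtain ⟨B, hB⟩ := CStarAlgebra.nonneg_iff_eq_star_mul_self.mp hX.nonneg
    exact ⟨B, by rw [hB, star_eq_conjTranspose]⟩
  set c := B.mulVec a with hc
  have hb : ∀ i, b i = ∑ k, B k i * c k := by
    intro i
    rw [← hXa, ← Matrix.mulVec_mulVec]
    simp only [Matrix.mulVec, dotProduct, conjTranspose_apply, star_trivial, hc]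
  have ht : a ⬝ᵥ b = c ⬝ᵥ c := by
    rw [← hXa, ← Matrix.mulVec_mulVec, Matrix.dotProduct_mulVec, Matrix.vecMul_conjTranspose]
    simp [hc]
  have key : ∀ i, (b i)^2 ≤ (Bᴴ * B) i i * (a ⬝ᵥ b) := by
    intro i
    rw [hb i, ht]
    have := Finset.sum_mul_sq_le_sq_mul_sq Finset.univ (fun k => B k i) c
    calc (∑ k, B k i * c k)^2 ≤ (∑ k, (B k i)^2) * (∑ k, (c k)^2) := this
      _ = (Bᴴ * B) i i * (c ⬝ᵥ c) := by
          simp [Matrix.mul_apply, conjTranspose_apply, dotProduct, sq]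
  rw [div_le_iff₀ hab]
  have : b ⬝ᵥ b = ∑ i, (b i)^2 := by simp [dotProduct, sq]
  rw [this, Matrix.trace, Finset.sum_mul]
  exact Finset.sum_le_sum fun i _ => key i

/-- Example 3.2 of the paper, optimal solution claim. For `a, b ∈ ℝⁿ` with
`⟨a,b⟩ > 0`: every symmetric positive semidefinite `X` with `X a = b` has
`tr X ≥ ‖b‖²/⟨a,b⟩`; the matrix `X* = b bᵀ/⟨a,b⟩` is positive semidefinite, satisfies
`X* a = b` and `tr X* = ‖b‖²/⟨a,b⟩`; hence the optimal value of
`min{tr X : X ⪰ 0, X a = b}` equals `‖b‖²/⟨a,b⟩`. -/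
theorem stmt18 {n : ℕ} (a b : Fin n → ℝ) (hab : 0 < a ⬝ᵥ b) :
    (∀ X : Matrix (Fin n) (Fin n) ℝ, X.PosSemidef → X.mulVec a = b →
      (b ⬝ᵥ b) / (a ⬝ᵥ b) ≤ X.trace) ∧
    ((((a ⬝ᵥ b)⁻¹) • Matrix.vecMulVec b b).PosSemidef ∧
      (((a ⬝ᵥ b)⁻¹) • Matrix.vecMulVec b b).mulVec a = b ∧
      (((a ⬝ᵥ b)⁻¹) • Matrix.vecMulVec b b).trace = (b ⬝ᵥ b) / (a ⬝ᵥ b)) ∧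
    IsLeast {v : ℝ | ∃ X : Matrix (Fin n) (Fin n) ℝ,
        X.PosSemidef ∧ X.mulVec a = b ∧ v = X.trace}
      ((b ⬝ᵥ b) / (a ⬝ᵥ b)) := by
  have ht : a ⬝ᵥ b ≠ 0 := ne_of_gt hab
  have hpsd : (((a ⬝ᵥ b)⁻¹) • Matrix.vecMulVec b b).PosSemidef := by
    refine Matrix.PosSemidef.of_dotProduct_mulVec_nonneg ?_ ?_
    · unfold Matrix.IsHermitian
      ext i j
      simp [Matrix.vecMulVec_apply, conjTranspose_apply, mul_comm]
    · intro x
      have : star x ⬝ᵥ ((((a ⬝ᵥ b)⁻¹) • Matrix.vecMulVec b b) *ᵥ x)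
          = (a ⬝ᵥ b)⁻¹ * (b ⬝ᵥ x)^2 := by
        simp [dotProduct, Matrix.mulVec, Matrix.vecMulVec_apply, Finset.mul_sum,
          Finset.sum_mul, sq]
        rw [Finset.sum_comm]
        apply Finset.sum_congr rfl
        intro i _
        apply Finset.sum_congr rfl
        intro j _
        ring
      rw [this]
      positivity
  have hmv : (((a ⬝ᵥ b)⁻¹) • Matrix.vecMulVec b b).mulVec a = b := by
    ext i
    have : ((((a ⬝ᵥ b)⁻¹) • Matrix.vecMulVec b b) *ᵥ a) i
        = (a ⬝ᵥ b)⁻¹ * ((a ⬝ᵥ b) * b i) := by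
      simp [Matrix.mulVec, dotProduct, Matrix.vecMulVec_apply, Finset.mul_sum, Finset.sum_mul]
      apply Finset.sum_congr rfl
      intro j _
      ring
    rw [this, inv_mul_cancel_left₀ ht]
  have htr : (((a ⬝ᵥ b)⁻¹) • Matrix.vecMulVec b b).trace = (b ⬝ᵥ b) / (a ⬝ᵥ b) := by
    simp [Matrix.trace, Matrix.diag, Matrix.vecMulVec_apply, dotProduct, div_eq_inv_mul,
      Finset.mul_sum]
  refine ⟨fun X hX hXa => lb_aux a b hab X hX hXa, ⟨hpsd, hmv, htr⟩,
    ⟨⟨_, hpsd, hmv, htr.symm⟩, fun v ⟨X, hX, hXa, hv⟩ => hv ▸ lb_aux a b hab X hX hXa⟩⟩
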